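/- (Quasi-Eulerian irreducibility) If (A,v,v) ∈ ℛ and u is a neighbor of v, then (A,v,v) ↔ (A △ uv, u, v), where △ denotes symmetric difference. -/
import Mathlib


attribute [local instance] Classical.propDecidable

namespace FPL

/-- Vertices of the brick-wall honeycomb lattice with periodic boundary conditions. -/
abbrev Vtx (m n : ℕ) := ZMod m × ZMod n

/-- Adjacency on the brick-wall honeycomb lattice: horizontal edges between `(i,j)` and
`(i+1,j)`, and vertical edges between `(i,j)` and `(i,j+1)` whenever `i+j` is even. -/
def HoneyAdj (m n : ℕ) (x y : Vtx m n) : Prop :=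
  (x.2 = y.2 ∧ (y.1 = x.1 + 1 ∨ x.1 = y.1 + 1)) ∨
  (x.1 = y.1 ∧ ((y.2 = x.2 + 1 ∧ Even (x.1.val + x.2.val)) ∨
                (x.2 = y.2 + 1 ∧ Even (y.1.val + y.2.val))))

variable (m n : ℕ) [NeZero m] [NeZero n]

/-- The edge set of the brick-wall honeycomb lattice. -/
noncomputable def honeyEdges : Finset (Sym2 (Vtx m n)) :=
  Finset.image (fun p : Vtx m n × Vtx m n => s(p.1, p.2))
    (Finset.univ.filter fun p => HoneyAdj m n p.1 p.2)

/-- `bdeg m n A x` is the degree of the vertex `x` in the spanning subgraph `(V, A)`. -/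
noncomputable def bdeg (A : Finset (Sym2 (Vtx m n))) (x : Vtx m n) : ℕ :=
  (A.filter fun e => x ∈ e).card

/-- `(A,u,v)` is a state of the worm chain: `A ⊆ E`, and the set of odd-degree vertices of
`(V,A)` is `{u,v}` if `u ≠ v`, and is empty if `u = v`. -/
def IsWormState (A : Finset (Sym2 (Vtx m n))) (u v : Vtx m n) : Prop :=
  A ⊆ honeyEdges m n ∧ ∀ x, (Odd (bdeg m n A x) ↔ ((x = u ∨ x = v) ∧ u ≠ v))

/-- The worm state space `𝒮`. -/
abbrev WormState := {p : Finset (Sym2 (Vtx m n)) × Vtx m n × Vtx m n //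
  IsWormState m n p.1 p.2.1 p.2.2}

/-- The set `ℛ` of states with no isolated vertices. -/
def FullSupport (st : WormState m n) : Prop := ∀ x : Vtx m n, bdeg m n st.1.1 x ≠ 0

/-- The fully-packed worm transition matrix `P'_∞`. -/
noncomputable def Pinf : Matrix (WormState m n) (WormState m n) ℝ := fun st tt =>
  if st.1.2.1 = st.1.2.2 then
    (if tt = st then (bdeg m n st.1.1 st.1.2.2 : ℝ) / 3 else 0) +
    (if ∃ v' : Vtx m n, HoneyAdj m n st.1.2.2 v' ∧ s(st.1.2.2, v') ∉ st.1.1 ∧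
        tt.1.1 = insert s(st.1.2.2, v') st.1.1 ∧
        ((tt.1.2.1 = v' ∧ tt.1.2.2 = st.1.2.2) ∨ (tt.1.2.1 = st.1.2.2 ∧ tt.1.2.2 = v'))
      then 1/6 else 0)
  else
    (if bdeg m n st.1.1 st.1.2.1 = 3 ∧ ∃ u' : Vtx m n, HoneyAdj m n st.1.2.1 u' ∧
        s(st.1.2.1, u') ∈ st.1.1 ∧ tt.1.1 = st.1.1.erase s(st.1.2.1, u') ∧
        tt.1.2.1 = u' ∧ tt.1.2.2 = st.1.2.2 then 1/6 else 0) +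
    (if bdeg m n st.1.1 st.1.2.1 = 1 ∧ ∃ u' : Vtx m n, HoneyAdj m n st.1.2.1 u' ∧
        s(st.1.2.1, u') ∉ st.1.1 ∧ tt.1.1 = insert s(st.1.2.1, u') st.1.1 ∧
        tt.1.2.1 = u' ∧ tt.1.2.2 = st.1.2.2 then 1/4 else 0) +
    (if bdeg m n st.1.1 st.1.2.2 = 3 ∧ ∃ v' : Vtx m n, HoneyAdj m n st.1.2.2 v' ∧
        s(st.1.2.2, v') ∈ st.1.1 ∧ tt.1.1 = st.1.1.erase s(st.1.2.2, v') ∧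
        tt.1.2.1 = st.1.2.1 ∧ tt.1.2.2 = v' then 1/6 else 0) +
    (if bdeg m n st.1.1 st.1.2.2 = 1 ∧ ∃ v' : Vtx m n, HoneyAdj m n st.1.2.2 v' ∧
        s(st.1.2.2, v') ∉ st.1.1 ∧ tt.1.1 = insert s(st.1.2.2, v') st.1.1 ∧
        tt.1.2.1 = st.1.2.1 ∧ tt.1.2.2 = v' then 1/4 else 0)

/-- `st → tt`: some power of `P'_∞` has positive `(st,tt)` entry. -/
def Reaches (st tt : WormState m n) : Prop := ∃ k : ℕ, 0 < (Pinf m n ^ k) st tt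

/-- `st ↔ tt`: mutual reachability. -/
def Comm (st tt : WormState m n) : Prop := Reaches m n st tt ∧ Reaches m n tt st

/-- The fully-packed configuration consisting of all horizontal edges. -/
noncomputable def Hconfig : Finset (Sym2 (Vtx m n)) :=
  Finset.image (fun p : Vtx m n => s(p, (p.1 + 1, p.2))) Finset.univ

set_option linter.unusedSectionVars false


lemma honeyAdj_symm {x y : Vtx m n} (h : HoneyAdj m n x y) : HoneyAdj m n y x := by
  rcases h with ⟨h1, h2⟩ | ⟨h1, h2 | h2⟩
  · exact Or.inl ⟨h1.symm, h2.symm⟩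
  · exact Or.inr ⟨h1.symm, Or.inr ⟨h2.1, h2.2⟩⟩
  · exact Or.inr ⟨h1.symm, Or.inl ⟨h2.1, h2.2⟩⟩

lemma zmod_one_ne_zero {k : ℕ} (hk : 2 ≤ k) : (1 : ZMod k) ≠ 0 := by
  haveI : NeZero k := ⟨by omega⟩
  haveI : Fact (1 < k) := ⟨by omega⟩
  intro h1
  have := congrArg ZMod.val h1
  rw [ZMod.val_one, ZMod.val_zero] at this
  exact one_ne_zero this

lemma zmod_two_ne_zero {k : ℕ} (hk : 3 ≤ k) : (2 : ZMod k) ≠ 0 := by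
  intro h1
  have h2 : ((2 : ℕ) : ZMod k) = 0 := by push_cast; exact h1
  rw [ZMod.natCast_eq_zero_iff] at h2
  have := Nat.le_of_dvd (by norm_num) h2
  omega

lemma zmod_add_one_ne {k : ℕ} (hk : 2 ≤ k) (a : ZMod k) : a + 1 ≠ a := by
  intro h
  exact zmod_one_ne_zero hk (by linear_combination h)

lemma honeyAdj_ne (hm4 : 4 ≤ m) (hn4 : 4 ≤ n) {x y : Vtx m n}
    (h : HoneyAdj m n x y) : x ≠ y := by
  rintro rfl
  rcases h with ⟨-, h2 | h2⟩ | ⟨-, ⟨h2, -⟩ | ⟨h2, -⟩⟩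
  · exact zmod_add_one_ne (by omega) x.1 h2.symm
  · exact zmod_add_one_ne (by omega) x.1 h2.symm
  · exact zmod_add_one_ne (by omega) x.2 h2.symm
  · exact zmod_add_one_ne (by omega) x.2 h2.symm

lemma mem_honeyEdges {x y : Vtx m n} (h : HoneyAdj m n x y) :
    s(x, y) ∈ honeyEdges m n := by
  apply Finset.mem_image.mpr
  exact ⟨(x, y), Finset.mem_filter.mpr ⟨Finset.mem_univ _, h⟩, rfl⟩

lemma bdeg_insert {A : Finset (Sym2 (Vtx m n))} {e : Sym2 (Vtx m n)} (he : e ∉ A)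
    (x : Vtx m n) :
    bdeg m n (insert e A) x = bdeg m n A x + (if x ∈ e then 1 else 0) := by
  unfold bdeg
  rw [Finset.filter_insert]
  split_ifs with h
  · rw [Finset.card_insert_of_notMem (fun hc => he (Finset.mem_filter.mp hc).1)]
  · simp

lemma bdeg_erase {A : Finset (Sym2 (Vtx m n))} {e : Sym2 (Vtx m n)} (he : e ∈ A)
    (x : Vtx m n) :
    bdeg m n A x = bdeg m n (A.erase e) x + (if x ∈ e then 1 else 0) := by
  unfold bdeg
  rw [Finset.filter_erase]
  split_ifs with h
  · rw [Finset.card_erase_add_one (Finset.mem_filter.mpr ⟨he, h⟩)]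
  · have hne : e ∉ Finset.filter (fun e => x ∈ e) A :=
      fun hc => h (Finset.mem_filter.mp hc).2
    rw [Finset.erase_eq_of_notMem hne]; simp

lemma even_mod_even {k r : ℕ} (hk : Even k) : Even (r % k) ↔ Even r := by
  conv_rhs => rw [← Nat.div_add_mod r k]
  rw [Nat.even_add]
  have : Even (k * (r / k)) := hk.mul_right _
  tauto

lemma val_add_one_parity (hn2 : Even n) (a : ZMod n) :
    Even ((a + 1).val) ↔ ¬ Even a.val := by
  have hn1 : 1 < n := by
    rcases hn2 with ⟨c, hc⟩
    have := NeZero.ne n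
    omega
  haveI : Fact (1 < n) := ⟨hn1⟩
  rw [ZMod.val_add, ZMod.val_one, even_mod_even hn2, Nat.even_add_one]

/-- classification of neighbours -/
lemma honeyAdj_cases (hn2 : Even n) {x y : Vtx m n} (h : HoneyAdj m n x y) :
    y = (x.1 + 1, x.2) ∨ y = (x.1 - 1, x.2) ∨
    (Even (x.1.val + x.2.val) ∧ y = (x.1, x.2 + 1)) ∨
    (¬ Even (x.1.val + x.2.val) ∧ y = (x.1, x.2 - 1)) := by
  rcases h with ⟨h1, h2 | h2⟩ | ⟨h1, ⟨h2, h3⟩ | ⟨h2, h3⟩⟩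
  · exact Or.inl (by rw [Prod.ext_iff]; exact ⟨h2, h1.symm⟩)
  · refine Or.inr (Or.inl ?_)
    rw [Prod.ext_iff]
    exact ⟨by rw [h2]; ring, h1.symm⟩
  · exact Or.inr (Or.inr (Or.inl ⟨h3, by rw [Prod.ext_iff]; exact ⟨h1.symm, h2⟩⟩))
  · refine Or.inr (Or.inr (Or.inr ⟨?_, ?_⟩))
    · have hyx : x.2 = y.2 + 1 := h2
      have hp : Even (x.2.val) ↔ ¬ Even (y.2.val) := by
        rw [hyx]; exact val_add_one_parity n hn2 y.2
      rw [← h1] at h3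
      rw [Nat.even_add] at h3 ⊢
      tauto
    · rw [Prod.ext_iff]
      refine ⟨h1.symm, ?_⟩
      rw [h2]; ring

/-- the three candidate edges at a vertex -/
noncomputable def vertNbr (x : Vtx m n) : Vtx m n :=
  if Even (x.1.val + x.2.val) then (x.1, x.2 + 1) else (x.1, x.2 - 1)

lemma honeyAdj_right (x : Vtx m n) : HoneyAdj m n x (x.1 + 1, x.2) :=
  Or.inl ⟨rfl, Or.inl rfl⟩

lemma honeyAdj_left (x : Vtx m n) : HoneyAdj m n x (x.1 - 1, x.2) :=
  Or.inl ⟨rfl, Or.inr (by simp)⟩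

lemma honeyAdj_vert (hn2 : Even n) (x : Vtx m n) : HoneyAdj m n x (vertNbr m n x) := by
  unfold vertNbr
  split_ifs with h
  · exact Or.inr ⟨rfl, Or.inl ⟨rfl, h⟩⟩
  · refine Or.inr ⟨rfl, Or.inr ⟨by simp, ?_⟩⟩
    have := val_add_one_parity n hn2 (x.2 - 1)
    rw [sub_add_cancel] at this
    rw [Nat.even_add]
    rw [Nat.even_add] at h
    tauto

lemma filter_mem_subset (hn2 : Even n) {A : Finset (Sym2 (Vtx m n))}
    (hA : A ⊆ honeyEdges m n) (x : Vtx m n) :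
    (A.filter fun e => x ∈ e) ⊆
      {s(x, (x.1 + 1, x.2)), s(x, (x.1 - 1, x.2)), s(x, vertNbr m n x)} := by
  intro e he
  obtain ⟨heA, hex⟩ := Finset.mem_filter.mp he
  obtain ⟨p, hp, hpe⟩ := Finset.mem_image.mp (hA heA)
  have hadj : HoneyAdj m n p.1 p.2 := (Finset.mem_filter.mp hp).2
  subst hpe
  have hx : x = p.1 ∨ x = p.2 := Sym2.mem_iff.mp hex
  have key : ∃ y, s(p.1, p.2) = s(x, y) ∧ HoneyAdj m n x y := by
    rcases hx with rfl | rfl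
    · exact ⟨p.2, rfl, hadj⟩
    · exact ⟨p.1, Sym2.eq_swap, honeyAdj_symm m n hadj⟩
  obtain ⟨y, hey, hxy⟩ := key
  rw [hey]
  rcases honeyAdj_cases m n hn2 hxy with h | h | ⟨hp, h⟩ | ⟨hp, h⟩
  · subst h; simp
  · subst h; simp
  · subst h; simp [vertNbr, hp]
  · subst h; simp [vertNbr, hp]

lemma bdeg_le_three (hn2 : Even n) {A : Finset (Sym2 (Vtx m n))}
    (hA : A ⊆ honeyEdges m n) (x : Vtx m n) : bdeg m n A x ≤ 3 := by
  have h := Finset.card_le_card (filter_mem_subset m n hn2 hA x)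
  refine le_trans h ?_
  refine le_trans (Finset.card_insert_le _ _) ?_
  refine Nat.succ_le_succ (le_trans (Finset.card_insert_le _ _) ?_)
  simp

lemma sym2_left_inj {x a b : Vtx m n} (ha : a ≠ x) (h : s(x, a) = s(x, b)) : a = b := by
  rw [Sym2.eq_iff] at h
  rcases h with ⟨-, h⟩ | ⟨h1, h2⟩
  · exact h
  · exact absurd h2 ha

/-- existence of a neighbour whose edge is missing, when the degree is 2 -/
lemma exists_missing (hm4 : 4 ≤ m) (hn4 : 4 ≤ n) (hn2 : Even n)
    {A : Finset (Sym2 (Vtx m n))} (hA : A ⊆ honeyEdges m n) {v : Vtx m n}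
    (hv : bdeg m n A v = 2) :
    ∃ w, HoneyAdj m n v w ∧ s(v, w) ∉ A := by
  by_contra hc
  push_neg at hc
  -- all three candidate edges are in A
  set e1 : Sym2 (Vtx m n) := s(v, (v.1 + 1, v.2)) with he1
  set e2 : Sym2 (Vtx m n) := s(v, (v.1 - 1, v.2)) with he2
  set e3 : Sym2 (Vtx m n) := s(v, vertNbr m n v) with he3
  have h1 : e1 ∈ A.filter fun e => v ∈ e :=
    Finset.mem_filter.mpr ⟨hc _ (honeyAdj_right m n v), by simp [he1]⟩
  have h2 : e2 ∈ A.filter fun e => v ∈ e :=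
    Finset.mem_filter.mpr ⟨hc _ (honeyAdj_left m n v), by simp [he2]⟩
  have h3 : e3 ∈ A.filter fun e => v ∈ e :=
    Finset.mem_filter.mpr ⟨hc _ (honeyAdj_vert m n hn2 v), by simp [he3]⟩
  -- the three edges are distinct
  have hne1 : (v.1 + 1, v.2) ≠ v := fun h => zmod_add_one_ne (by omega) v.1 (congrArg Prod.fst h)
  have hd12 : e1 ≠ e2 := by
    intro h
    have := sym2_left_inj m n hne1 h
    have h1 : v.1 + 1 = v.1 - 1 := congrArg Prod.fst this
    exact zmod_two_ne_zero (k := m) (by omega) (by linear_combination h1)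
  have hvert2 : (vertNbr m n v).2 ≠ v.2 := by
    unfold vertNbr
    split_ifs <;> simp only
    · intro h; exact zmod_add_one_ne (by omega) v.2 h
    · intro h
      exact zmod_one_ne_zero (k := n) (by omega) (by linear_combination -h)
  have hd13 : e1 ≠ e3 := by
    intro h
    have := sym2_left_inj m n hne1 h
    exact hvert2 (congrArg Prod.snd this).symm
  have hne2 : (v.1 - 1, v.2) ≠ v := by
    intro h
    have h1 : v.1 - 1 = v.1 := congrArg Prod.fst h
    exact zmod_one_ne_zero (k := m) (by omega) (by linear_combination -h1)
  have hd23 : e2 ≠ e3 := by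
    intro h
    have := sym2_left_inj m n hne2 h
    exact hvert2 (congrArg Prod.snd this).symm
  have hsub : ({e1, e2, e3} : Finset (Sym2 (Vtx m n))) ⊆ A.filter fun e => v ∈ e := by
    intro e he
    simp only [Finset.mem_insert, Finset.mem_singleton] at he
    rcases he with rfl | rfl | rfl <;> assumption
  have hcard : ({e1, e2, e3} : Finset (Sym2 (Vtx m n))).card = 3 := by
    rw [Finset.card_insert_of_notMem (by simp [hd12, hd13]),
        Finset.card_insert_of_notMem (by simp [hd23])]
    simp
  have := Finset.card_le_card hsub
  rw [hcard] at this
  unfold bdeg at hv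
  omega


-- reachability machinery
lemma Pinf_nonneg (s t : WormState m n) : 0 ≤ Pinf m n s t := by
  simp only [Pinf]
  split_ifs <;> positivity

lemma pow_apply_nonneg (k : ℕ) (s t : WormState m n) : 0 ≤ (Pinf m n ^ k) s t := by
  induction k generalizing s t with
  | zero => rw [pow_zero, Matrix.one_apply]; split_ifs <;> norm_num
  | succ k ih =>
      rw [pow_succ, Matrix.mul_apply]
      exact Finset.sum_nonneg fun r _ => mul_nonneg (ih s r) (Pinf_nonneg m n r t)

lemma reaches_of_pos {s t : WormState m n} (h : 0 < Pinf m n s t) : Reaches m n s t :=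
  ⟨1, by rwa [pow_one]⟩

lemma reaches_trans {s t r : WormState m n} (h1 : Reaches m n s t) (h2 : Reaches m n t r) :
    Reaches m n s r := by
  obtain ⟨j, hj⟩ := h1; obtain ⟨k, hk⟩ := h2
  refine ⟨j + k, ?_⟩
  rw [pow_add, Matrix.mul_apply]
  refine lt_of_lt_of_le (mul_pos hj hk) ?_
  exact Finset.single_le_sum
    (fun q _ => mul_nonneg (pow_apply_nonneg m n j s q) (pow_apply_nonneg m n k q r))
    (Finset.mem_univ t)

lemma ite_nonneg' {c : Prop} [Decidable c] {x : ℝ} (hx : 0 ≤ x) :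
    (0:ℝ) ≤ if c then x else 0 := by
  split_ifs with h
  · exact hx
  · exact le_refl 0


theorem quasi_eulerian (m n : ℕ) [NeZero m] [NeZero n]
    (hm : Even m) (hn : Even n) (hm4 : 4 ≤ m) (hn4 : 4 ≤ n)
    (st : WormState m n) (v : Vtx m n) (hst : st.1.2 = (v, v))
    (hR : FullSupport m n st) (u : Vtx m n) (hadj : HoneyAdj m n u v) :
    ∃ t1 : WormState m n,
      t1.1 = ((if s(u, v) ∈ st.1.1 then st.1.1.erase s(u, v) else insert s(u, v) st.1.1), u, v) ∧
      Comm m n st t1 := by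
  obtain ⟨⟨A, q⟩, hws⟩ := st
  have hq : q = (v, v) := hst
  subst hq
  have hsub : A ⊆ honeyEdges m n := hws.1
  have heven : ∀ x, ¬ Odd (bdeg m n A x) := by
    intro x h
    have := (hws.2 x).mp h
    exact this.2 rfl
  have hdeg : ∀ x, bdeg m n A x = 2 := by
    intro x
    have h1 : bdeg m n A x ≠ 0 := hR x
    have h2 := bdeg_le_three m n hn hsub x
    have h3 := heven x
    rw [Nat.odd_iff] at h3
    omega
  have huv_ne : u ≠ v := honeyAdj_ne m n hm4 hn4 hadj
  have hadj' : HoneyAdj m n v u := honeyAdj_symm m n hadj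
  have hvuA : s(v, u) = s(u, v) := Sym2.eq_swap
  by_cases huv : s(u, v) ∈ A
  · -- edge present: remove it, via a three-step path
    obtain ⟨w, hvw_adj, hvwA⟩ := exists_missing m n hm4 hn4 hn hsub (hdeg v)
    have hvw_ne : v ≠ w := honeyAdj_ne m n hm4 hn4 hvw_adj
    have huw_ne : u ≠ w := by
      intro h
      apply hvwA
      rw [← h, hvuA]
      exact huv
    set B1 : Finset (Sym2 (Vtx m n)) := insert s(v, w) A with hB1
    set B2 : Finset (Sym2 (Vtx m n)) := B1.erase s(v, u) with hB2
    set B3 : Finset (Sym2 (Vtx m n)) := A.erase s(u, v) with hB3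
    have hvuB1 : s(v, u) ∈ B1 := Finset.mem_insert_of_mem (by rw [hvuA]; exact huv)
    have hset : B2.erase s(v, w) = A.erase s(v, u) := by
      ext e
      simp only [hB2, hB1, Finset.mem_erase, Finset.mem_insert]
      constructor
      · rintro ⟨h1, h2, (rfl | h3)⟩
        · exact absurd rfl h1
        · exact ⟨h2, h3⟩
      · rintro ⟨h1, h2⟩
        exact ⟨fun hc => hvwA (hc ▸ h2), h1, Or.inr h2⟩
    have hd1 : ∀ x, bdeg m n B1 x = 2 + (if x = v ∨ x = w then 1 else 0) := by
      intro x
      rw [hB1, bdeg_insert m n hvwA x, hdeg x]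
      simp [Sym2.mem_iff]
    have hd2 : ∀ x, bdeg m n B2 x + (if x = v ∨ x = u then 1 else 0)
        = 2 + (if x = v ∨ x = w then 1 else 0) := by
      intro x
      have h := bdeg_erase m n (e := s(v, u)) hvuB1 x
      rw [← hd1 x, hB2]
      rw [h]
      simp [Sym2.mem_iff]
    have hd3 : ∀ x, bdeg m n B3 x + (if x = u ∨ x = v then 1 else 0) = 2 := by
      intro x
      have h := bdeg_erase m n (e := s(u, v)) huv x
      rw [← hdeg x, hB3, h]
      simp [Sym2.mem_iff]
    -- worm states
    have hws1 : IsWormState m n B1 v w := by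
      refine ⟨Finset.insert_subset (mem_honeyEdges m n hvw_adj) hsub, fun x => ?_⟩
      rw [hd1 x, Nat.odd_iff]
      by_cases h : x = v ∨ x = w
      · rw [if_pos h]; simp [h, hvw_ne]
      · rw [if_neg h]; simp [h]
    have hws2 : IsWormState m n B2 u w := by
      refine ⟨(Finset.erase_subset _ _).trans
        (Finset.insert_subset (mem_honeyEdges m n hvw_adj) hsub), fun x => ?_⟩
      have h2 := hd2 x
      rw [Nat.odd_iff]
      by_cases hxu : x = u
      · subst hxu
        rw [if_pos (Or.inr rfl),
            if_neg (by rintro (h | h); exacts [huv_ne h, huw_ne h])] at h2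
        have hb : bdeg m n B2 x = 1 := by omega
        simp [hb, huw_ne]
      · by_cases hxv : x = v
        · subst hxv
          rw [if_pos (Or.inl rfl), if_pos (Or.inl rfl)] at h2
          have hb : bdeg m n B2 x = 2 := by omega
          simp [hb, hxu, fun h : x = w => hvw_ne h]
        · by_cases hxw : x = w
          · subst hxw
            rw [if_neg (by rintro (h | h); exacts [hxv h, hxu h]),
                if_pos (Or.inr rfl)] at h2
            have hb : bdeg m n B2 x = 3 := by omega
            simp [hb, huw_ne, hxu]
          · rw [if_neg (by rintro (h | h); exacts [hxv h, hxu h]),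
                if_neg (by rintro (h | h); exacts [hxv h, hxw h])] at h2
            have hb : bdeg m n B2 x = 2 := by omega
            simp [hb, hxu, hxw]
    have hwt1 : IsWormState m n B3 u v := by
      refine ⟨(Finset.erase_subset _ _).trans hsub, fun x => ?_⟩
      have h3 := hd3 x
      rw [Nat.odd_iff]
      by_cases h : x = u ∨ x = v
      · rw [if_pos h] at h3
        have hb : bdeg m n B3 x = 1 := by omega
        simp [hb, h, huv_ne]
      · rw [if_neg h] at h3
        have hb : bdeg m n B3 x = 2 := by omega
        simp [hb, h]
    -- transitions
    have step1 : 0 < Pinf m n ⟨(A, v, v), hws⟩ ⟨(B1, v, w), hws1⟩ := by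
      have hcond : ∃ v' : Vtx m n, HoneyAdj m n v v' ∧ s(v, v') ∉ A ∧
          B1 = insert s(v, v') A ∧ (v = v' ∧ w = v ∨ w = v') :=
        ⟨w, hvw_adj, hvwA, rfl, Or.inr rfl⟩
      simp only [Pinf, eq_self_iff_true, if_true, true_and, and_true]
      rw [if_pos hcond]
      exact add_pos_of_nonneg_of_pos (ite_nonneg' (by positivity)) (by norm_num)
    have step2 : 0 < Pinf m n ⟨(B1, v, w), hws1⟩ ⟨(B2, u, w), hws2⟩ := by
      have hb : bdeg m n B1 v = 3 := by rw [hd1 v]; simp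
      have hcond : bdeg m n B1 v = 3 ∧ ∃ u' : Vtx m n, HoneyAdj m n v u' ∧
          s(v, u') ∈ B1 ∧ B2 = B1.erase s(v, u') ∧ u = u' :=
        ⟨hb, u, hadj', hvuB1, rfl, rfl⟩
      simp only [Pinf, eq_self_iff_true, if_true, true_and, and_true]
      rw [if_neg (hvw_ne : ¬ (v = w)), if_pos hcond]
      refine add_pos_of_pos_of_nonneg (add_pos_of_pos_of_nonneg
        (add_pos_of_pos_of_nonneg (by norm_num) (ite_nonneg' (by norm_num)))
        (ite_nonneg' (by norm_num))) (ite_nonneg' (by norm_num))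
    have step3 : 0 < Pinf m n ⟨(B2, u, w), hws2⟩ ⟨(B3, u, v), hwt1⟩ := by
      have hbw : bdeg m n B2 w = 3 := by
        have h := hd2 w
        rw [if_neg (by rintro (h1 | h1); exacts [hvw_ne h1.symm, huw_ne h1.symm]),
            if_pos (Or.inr rfl)] at h
        omega
      have hwv : s(w, v) = s(v, w) := Sym2.eq_swap
      have hmem : s(w, v) ∈ B2 := by
        refine Finset.mem_erase.mpr ⟨?_, by rw [hwv]; exact Finset.mem_insert_self _ _⟩
        intro hc
        rw [hwv] at hc
        exact huw_ne (sym2_left_inj m n (Ne.symm hvw_ne) hc).symm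
      have hcond : bdeg m n B2 w = 3 ∧ ∃ v' : Vtx m n, HoneyAdj m n w v' ∧
          s(w, v') ∈ B2 ∧ B3 = B2.erase s(w, v') ∧ v = v' :=
        ⟨hbw, v, honeyAdj_symm m n hvw_adj, hmem,
          by rw [hwv, hB3, ← hvuA, ← hset], rfl⟩
      simp only [Pinf, eq_self_iff_true, if_true, true_and, and_true]
      rw [if_neg (huw_ne : ¬ (u = w)), if_pos hcond]
      refine add_pos_of_pos_of_nonneg (add_pos_of_nonneg_of_pos
        (add_nonneg (ite_nonneg' (by norm_num)) (ite_nonneg' (by norm_num)))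
        (by norm_num)) (ite_nonneg' (by norm_num))
    have stepB : 0 < Pinf m n ⟨(B3, u, v), hwt1⟩ ⟨(A, v, v), hws⟩ := by
      have hbu : bdeg m n B3 u = 1 := by
        have h := hd3 u
        rw [if_pos (Or.inl rfl)] at h
        omega
      have hcond : bdeg m n B3 u = 1 ∧ ∃ u' : Vtx m n, HoneyAdj m n u u' ∧
          s(u, u') ∉ B3 ∧ A = insert s(u, u') B3 ∧ v = u' :=
        ⟨hbu, v, hadj, Finset.notMem_erase _ _, (Finset.insert_erase huv).symm, rfl⟩
      simp only [Pinf, eq_self_iff_true, if_true, true_and, and_true]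
      rw [if_neg (huv_ne : ¬ (u = v)), if_pos hcond]
      refine add_pos_of_pos_of_nonneg (add_pos_of_pos_of_nonneg
        (add_pos_of_nonneg_of_pos (ite_nonneg' (by norm_num)) (by norm_num))
        (ite_nonneg' (by norm_num))) (ite_nonneg' (by norm_num))
    refine ⟨⟨(B3, u, v), hwt1⟩, ?_, ?_, reaches_of_pos m n stepB⟩
    · rw [if_pos huv]
    · exact reaches_trans m n (reaches_of_pos m n step1)
        (reaches_trans m n (reaches_of_pos m n step2) (reaches_of_pos m n step3))
  · -- edge absent: add it, one step each way
    set B : Finset (Sym2 (Vtx m n)) := insert s(u, v) A with hB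
    have hd : ∀ x, bdeg m n B x = 2 + (if x = u ∨ x = v then 1 else 0) := by
      intro x
      rw [hB, bdeg_insert m n huv x, hdeg x]
      simp [Sym2.mem_iff]
    have hwt1 : IsWormState m n B u v := by
      refine ⟨Finset.insert_subset (mem_honeyEdges m n hadj) hsub, fun x => ?_⟩
      rw [hd x, Nat.odd_iff]
      by_cases h : x = u ∨ x = v
      · rw [if_pos h]; simp [h, huv_ne]
      · rw [if_neg h]; simp [h]
    have hvuA' : s(v, u) ∉ A := by rw [hvuA]; exact huv
    have step1 : 0 < Pinf m n ⟨(A, v, v), hws⟩ ⟨(B, u, v), hwt1⟩ := by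
      have hcond : ∃ v' : Vtx m n, HoneyAdj m n v v' ∧ s(v, v') ∉ A ∧
          B = insert s(v, v') A ∧ (u = v' ∨ u = v ∧ v = v') :=
        ⟨u, hadj', hvuA', by rw [hB, hvuA], Or.inl rfl⟩
      simp only [Pinf, eq_self_iff_true, if_true, true_and, and_true]
      rw [if_pos hcond]
      exact add_pos_of_nonneg_of_pos (ite_nonneg' (by positivity)) (by norm_num)
    have stepB : 0 < Pinf m n ⟨(B, u, v), hwt1⟩ ⟨(A, v, v), hws⟩ := by
      have hbu : bdeg m n B u = 3 := by rw [hd u]; simp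
      have hcond : bdeg m n B u = 3 ∧ ∃ u' : Vtx m n, HoneyAdj m n u u' ∧
          s(u, u') ∈ B ∧ A = B.erase s(u, u') ∧ v = u' :=
        ⟨hbu, v, hadj, Finset.mem_insert_self _ _, (Finset.erase_insert huv).symm, rfl⟩
      simp only [Pinf, eq_self_iff_true, if_true, true_and, and_true]
      rw [if_neg (huv_ne : ¬ (u = v)), if_pos hcond]
      refine add_pos_of_pos_of_nonneg (add_pos_of_pos_of_nonneg
        (add_pos_of_pos_of_nonneg (by norm_num) (ite_nonneg' (by norm_num)))
        (ite_nonneg' (by norm_num))) (ite_nonneg' (by norm_num))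
    exact ⟨⟨(B, u, v), hwt1⟩, by rw [if_neg huv], reaches_of_pos m n step1,
      reaches_of_pos m n stepB⟩


end FPL
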